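/- Under the assumptions of the implicit relaxation update $f_k^* = d_k f_k^\ell + d_k\Delta t(\tilde\nu_{kk}\mathcal{K}_{kk}^* + \tilde\nu_{kj}\mathcal{K}_{kj}^*)$ for $k=1,2$, where $\mathcal{K}_{kk}^* (p) = (e^{-\alpha_k\cdot\mathbf{p}_k(p)} + \tau_k)^{-1}$ and $\mathcal{K}_{kj}^*$ are equilibria of the stated exponential form satisfying the conservation constraints (individual masses match $f_k^*$, joint momentum and energy match), and assuming all functions take values in the domain of $h_{\tau_k}$ pointwise, one has $\int h_{\tau_1}(f_1^*)\,dp + \int h_{\tau_2}(f_2^*)\,dp \le \int h_{\tau_1}(f_1^\ell)\,dp + \int h_{\tau_2}(f_2^\ell)\,dp$. -/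

import Mathlib

open MeasureTheory
open scoped RealInnerProductSpace

/-- Entropy density `h_τ`. -/
noncomputable def hent (τ z : ℝ) : ℝ :=
  if τ = 0 then z * Real.log z
  else z * Real.log z + τ⁻¹ * ((1 - τ * z) * Real.log (1 - τ * z))

/-- Domain of `h_τ`: `(0,1)` for fermions, `(0,∞)` otherwise. -/
noncomputable def entDom (τ : ℝ) : Set ℝ :=
  if τ = 1 then Set.Ioo 0 1 else Set.Ioi 0

/-- `x log y ≤ x log x + y - x` for positive `x, y` (Gibbs). -/
lemma mylog {x y : ℝ} (hx : 0 < x) (hy : 0 < y) :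
    x * Real.log y ≤ x * Real.log x + y - x := by
  have h := Real.log_le_sub_one_of_pos (x := y / x) (by positivity)
  rw [Real.log_div (ne_of_gt hy) (ne_of_gt hx)] at h
  have := mul_le_mul_of_nonneg_left h (le_of_lt hx)
  have hx' : x ≠ 0 := ne_of_gt hx
  field_simp at this
  nlinarith [this]

noncomputable def hder (τ z : ℝ) : ℝ :=
  Real.log z - Real.log (1 - τ * z) + (if τ = 0 then 1 else 0)

lemma grad_ineq {τ z w : ℝ} (hτ : τ ∈ ({-1, 0, 1} : Set ℝ))
    (hz : z ∈ entDom τ) (hw : w ∈ entDom τ) :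
    hent τ w + hder τ w * (z - w) ≤ hent τ z := by
  simp only [Set.mem_insert_iff, Set.mem_singleton_iff] at hτ
  rcases hτ with h | h | h
  · -- τ = -1
    subst h
    simp only [entDom, if_neg (by norm_num : (-1:ℝ) ≠ 1), Set.mem_Ioi] at hz hw
    simp only [hent, hder, if_neg (by norm_num : (-1:ℝ) ≠ 0)]
    have hz1 : (0:ℝ) < 1 + z := by linarith
    have hw1 : (0:ℝ) < 1 + w := by linarith
    -- goal after simp: involving 1 - (-1)*z = 1 + z
    have e1 : 1 - (-1) * z = 1 + z := by ring
    have e2 : 1 - (-1) * w = 1 + w := by ring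
    rw [e1, e2]
    -- expr = z log(z/w) - (1+z) log((1+z)/(1+w)) ≥ 0, via the r-trick
    have h1 := Real.log_le_sub_one_of_pos (x := (w * (1 + z)) / (z * (1 + w)))
      (by positivity)
    rw [Real.log_div (by positivity) (by positivity),
      Real.log_mul (ne_of_gt hw) (ne_of_gt hz1),
      Real.log_mul (ne_of_gt hz) (ne_of_gt hw1)] at h1
    have h2 := Real.log_le_sub_one_of_pos (x := (1 + z) / (1 + w)) (by positivity)
    rw [Real.log_div (ne_of_gt hz1) (ne_of_gt hw1)] at h2
    have h1' := mul_le_mul_of_nonneg_left h1 (le_of_lt hz)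
    have hratio : z * ((w * (1 + z)) / (z * (1 + w)) - 1) = (w * (1+z) - z * (1+w)) / (1+w) := by
      field_simp
    rw [hratio] at h1'
    have h2' : Real.log (1+z) - Real.log (1+w) ≤ (z - w) / (1 + w) := by
      have : (1+z)/(1+w) - 1 = (z - w)/(1+w) := by field_simp; ring
      linarith [h2, this.ge, this.le]
    have hkey : (w * (1+z) - z * (1+w)) / (1+w) + (z - w)/(1+w) = 0 := by
      field_simp; ring
    nlinarith [h1', h2']
  · -- τ = 0
    subst h
    simp only [entDom, if_neg (by norm_num : (0:ℝ) ≠ 1), Set.mem_Ioi] at hz hw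
    norm_num [hent, hder]
    nlinarith [mylog hz hw]
  · -- τ = 1
    subst h
    simp only [entDom, if_pos rfl, Set.mem_Ioo] at hz hw
    simp only [hent, hder, if_neg (by norm_num : (1:ℝ) ≠ 0), one_mul]
    obtain ⟨hz0, hz1⟩ := hz
    obtain ⟨hw0, hw1⟩ := hw
    have hz1' : (0:ℝ) < 1 - z := by linarith
    have hw1' : (0:ℝ) < 1 - w := by linarith
    have h1 := mylog hz0 hw0
    have h2 := mylog hz1' hw1'
    nlinarith [h1, h2]

lemma hder_mono {τ z w : ℝ} (hτ : τ ∈ ({-1, 0, 1} : Set ℝ))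
    (hz : z ∈ entDom τ) (hw : w ∈ entDom τ) :
    0 ≤ (hder τ z - hder τ w) * (z - w) := by
  -- wlog via rcases on le_total
  have main : ∀ a b : ℝ, a ∈ entDom τ → b ∈ entDom τ → b ≤ a → hder τ b ≤ hder τ a := by
    intro a b ha hb hba
    simp only [Set.mem_insert_iff, Set.mem_singleton_iff] at hτ
    simp only [hder]
    rcases hτ with h | h | h <;> subst h
    · simp only [entDom, if_neg (by norm_num : (-1:ℝ) ≠ 1), Set.mem_Ioi] at ha hb
      have ha1 : (0:ℝ) < 1 + a := by linarith
      have hb1 : (0:ℝ) < 1 + b := by linarith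
      have e1 : 1 - (-1) * a = 1 + a := by ring
      have e2 : 1 - (-1) * b = 1 + b := by ring
      rw [e1, e2]
      have key : Real.log (b * (1 + a)) ≤ Real.log (a * (1 + b)) :=
        Real.log_le_log (by positivity) (by nlinarith)
      rw [Real.log_mul (ne_of_gt hb) (ne_of_gt ha1),
        Real.log_mul (ne_of_gt ha) (ne_of_gt hb1)] at key
      simp only [if_neg (by norm_num : (-1:ℝ) ≠ 0)]
      linarith
    · simp only [entDom, if_neg (by norm_num : (0:ℝ) ≠ 1), Set.mem_Ioi] at ha hb
      norm_num
      exact Real.log_le_log hb hba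
    · simp only [entDom, if_pos rfl, Set.mem_Ioo] at ha hb
      obtain ⟨ha0, ha1⟩ := ha
      obtain ⟨hb0, hb1⟩ := hb
      have ha1' : (0:ℝ) < 1 - a := by linarith
      have hb1' : (0:ℝ) < 1 - b := by linarith
      have key : Real.log (b * (1 - a)) ≤ Real.log (a * (1 - b)) :=
        Real.log_le_log (by positivity) (by nlinarith)
      rw [Real.log_mul (ne_of_gt hb0) (ne_of_gt ha1'),
        Real.log_mul (ne_of_gt ha0) (ne_of_gt hb1')] at key
      simp only [one_mul, if_neg (by norm_num : (1:ℝ) ≠ 0)]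
      linarith
  rcases le_total w z with h | h
  · have := main z w hz hw h
    nlinarith
  · have := main w z hw hz h
    nlinarith

lemma entDom_pos {τ z : ℝ} (hz : z ∈ entDom τ) : 0 < z := by
  by_cases h : τ = 1
  · simp only [entDom, if_pos h, Set.mem_Ioo] at hz; exact hz.1
  · simpa only [entDom, if_neg h, Set.mem_Ioi] using hz

lemma hder_eq {τ A K : ℝ} (hK : K = (Real.exp (-A) + τ)⁻¹) (hKd : K ∈ entDom τ) :
    hder τ K = A + (if τ = 0 then 1 else 0) := by
  have hKpos : 0 < K := entDom_pos hKd
  have hS : 0 < Real.exp (-A) + τ := by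
    rcases lt_trichotomy (Real.exp (-A) + τ) 0 with h | h | h
    · exfalso; rw [hK] at hKpos; exact absurd hKpos (not_lt.2 (le_of_lt (inv_neg''.2 h)))
    · exfalso; rw [hK, h] at hKpos; simp at hKpos
    · exact h
  have hKval : K * (Real.exp (-A) + τ) = 1 := by
    rw [hK]; field_simp
  have h1 : 1 - τ * K = K * Real.exp (-A) := by nlinarith [hKval]
  simp only [hder, h1]
  rw [Real.log_mul (ne_of_gt hKpos) (Real.exp_ne_zero _), Real.log_exp]
  ring


lemma integrable_of_weight {g : EuclideanSpace ℝ (Fin 3) → ℝ}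
    (h : Integrable (fun p => (1 + ‖p‖ ^ 2) * g p)) :
    Integrable g ∧ Integrable (fun p => ‖p‖ ^ 2 * g p) := by
  have hne : ∀ p : EuclideanSpace ℝ (Fin 3), (1 : ℝ) + ‖p‖ ^ 2 ≠ 0 := fun p => by positivity
  have hc : Continuous fun p : EuclideanSpace ℝ (Fin 3) => ((1 : ℝ) + ‖p‖ ^ 2)⁻¹ :=
    (continuous_const.add ((continuous_norm).pow 2)).inv₀ hne
  have hgeq : g = fun p => ((1 : ℝ) + ‖p‖ ^ 2)⁻¹ * ((1 + ‖p‖ ^ 2) * g p) := by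
    funext p; field_simp
  have hm : AEStronglyMeasurable g volume := by
    rw [hgeq]; exact hc.aestronglyMeasurable.mul h.aestronglyMeasurable
  constructor
  · refine h.mono hm (Filter.Eventually.of_forall fun p => ?_)
    simp only [norm_mul, Real.norm_eq_abs]
    have h1 : (1:ℝ) ≤ |1 + ‖p‖ ^ 2| := by
      rw [abs_of_pos (by positivity)]; nlinarith [sq_nonneg ‖p‖]
    nlinarith [abs_nonneg (g p), h1]
  · have hm2 : AEStronglyMeasurable (fun p : EuclideanSpace ℝ (Fin 3) => ‖p‖ ^ 2 * g p) volume :=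
      ((continuous_norm.pow 2).aestronglyMeasurable).mul hm
    refine h.mono hm2 (Filter.Eventually.of_forall fun p => ?_)
    simp only [norm_mul, Real.norm_eq_abs]
    have h1 : |‖p‖ ^ 2| ≤ |1 + ‖p‖ ^ 2| := by
      rw [abs_of_nonneg (by positivity), abs_of_pos (by positivity)]; linarith
    nlinarith [abs_nonneg (g p), h1]

lemma Gint {m a0 a2 c : ℝ} (a1 : EuclideanSpace ℝ (Fin 3))
    {fs K : EuclideanSpace ℝ (Fin 3) → ℝ}
    (hfs2 : Integrable fun p : EuclideanSpace ℝ (Fin 3) => (1 + ‖p‖ ^ 2) * fs p)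
    (hK2 : Integrable fun p : EuclideanSpace ℝ (Fin 3) => (1 + ‖p‖ ^ 2) * K p)
    (hfsp : Integrable fun p : EuclideanSpace ℝ (Fin 3) => fs p • p)
    (hKp : Integrable fun p : EuclideanSpace ℝ (Fin 3) => K p • p) :
    Integrable (fun p : EuclideanSpace ℝ (Fin 3) =>
      (a0 + ⟪a1, p⟫ + a2 * ‖p‖ ^ 2 / (2 * m) + c) * (fs p - K p)) ∧
    (∫ p : EuclideanSpace ℝ (Fin 3),
        (a0 + ⟪a1, p⟫ + a2 * ‖p‖ ^ 2 / (2 * m) + c) * (fs p - K p)) =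
      (a0 + c) * ((∫ p : EuclideanSpace ℝ (Fin 3), fs p) - ∫ p : EuclideanSpace ℝ (Fin 3), K p)
      + ⟪a1, (∫ p : EuclideanSpace ℝ (Fin 3), fs p • p) - ∫ p : EuclideanSpace ℝ (Fin 3), K p • p⟫
      + a2 * ((∫ p : EuclideanSpace ℝ (Fin 3), ‖p‖ ^ 2 / (2 * m) * fs p)
          - ∫ p : EuclideanSpace ℝ (Fin 3), ‖p‖ ^ 2 / (2 * m) * K p) := by
  have hfs1 := (integrable_of_weight hfs2).1
  have hK1 := (integrable_of_weight hK2).1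
  have hfsE : Integrable fun p : EuclideanSpace ℝ (Fin 3) => ‖p‖ ^ 2 / (2 * m) * fs p := by
    have h := ((integrable_of_weight hfs2).2).const_mul ((2 * m)⁻¹)
    have he : (fun p : EuclideanSpace ℝ (Fin 3) => (2 * m)⁻¹ * (‖p‖ ^ 2 * fs p))
        = fun p => ‖p‖ ^ 2 / (2 * m) * fs p := by funext p; ring
    rwa [he] at h
  have hKE : Integrable fun p : EuclideanSpace ℝ (Fin 3) => ‖p‖ ^ 2 / (2 * m) * K p := by
    have h := ((integrable_of_weight hK2).2).const_mul ((2 * m)⁻¹)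
    have he : (fun p : EuclideanSpace ℝ (Fin 3) => (2 * m)⁻¹ * (‖p‖ ^ 2 * K p))
        = fun p => ‖p‖ ^ 2 / (2 * m) * K p := by funext p; ring
    rwa [he] at h
  have hsub : Integrable (fun p : EuclideanSpace ℝ (Fin 3) => fs p - K p) := hfs1.sub hK1
  have hgp : Integrable fun p : EuclideanSpace ℝ (Fin 3) => (fs p - K p) • p := by
    refine (hfsp.sub hKp).congr (Filter.Eventually.of_forall fun p => ?_)
    simp [sub_smul]
  have hGeq : (fun p : EuclideanSpace ℝ (Fin 3) =>
      (a0 + ⟪a1, p⟫ + a2 * ‖p‖ ^ 2 / (2 * m) + c) * (fs p - K p))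
      = fun p => ((a0 + c) * (fs p - K p) + ⟪a1, (fs p - K p) • p⟫)
          + a2 * (‖p‖ ^ 2 / (2 * m) * fs p - ‖p‖ ^ 2 / (2 * m) * K p) := by
    funext p; rw [real_inner_smul_right]; ring
  have hI1 : Integrable (fun p : EuclideanSpace ℝ (Fin 3) =>
      (a0 + c) * (fs p - K p) + ⟪a1, (fs p - K p) • p⟫) :=
    (hsub.const_mul _).add (hgp.const_inner a1)
  have hI2 : Integrable (fun p : EuclideanSpace ℝ (Fin 3) =>
      a2 * (‖p‖ ^ 2 / (2 * m) * fs p - ‖p‖ ^ 2 / (2 * m) * K p)) :=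
    (hfsE.sub hKE).const_mul _
  constructor
  · rw [hGeq]; exact hI1.add hI2
  · rw [hGeq, integral_add hI1 hI2,
      integral_add (hsub.const_mul _) (hgp.const_inner a1),
      integral_const_mul, integral_const_mul, integral_sub hfs1 hK1,
      integral_sub hfsE hKE, integral_inner hgp]
    have hsplit : (∫ p : EuclideanSpace ℝ (Fin 3), (fs p - K p) • p)
        = (∫ p : EuclideanSpace ℝ (Fin 3), fs p • p) - ∫ p : EuclideanSpace ℝ (Fin 3), K p • p := by
      rw [← integral_sub hfsp hKp]
      exact integral_congr_ae (Filter.Eventually.of_forall fun p => by simp [sub_smul])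
    rw [hsplit]

lemma species_pw {τ Δt νa νb z l ka kb Aa Ab : ℝ} (hτ : τ ∈ ({-1, 0, 1} : Set ℝ))
    (hΔt : 0 ≤ Δt) (hνa : 0 ≤ νa) (hνb : 0 ≤ νb)
    (hka : ka = (Real.exp (-Aa) + τ)⁻¹) (hkb : kb = (Real.exp (-Ab) + τ)⁻¹)
    (hl : l = z + Δt * (νa * (z - ka) + νb * (z - kb)))
    (hzd : z ∈ entDom τ) (hld : l ∈ entDom τ)
    (hkad : ka ∈ entDom τ) (hkbd : kb ∈ entDom τ) :
    hent τ z + Δt * νa * ((Aa + (if τ = 0 then 1 else 0)) * (z - ka))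
      + Δt * νb * ((Ab + (if τ = 0 then 1 else 0)) * (z - kb)) ≤ hent τ l := by
  have g := grad_ineq hτ (z := l) (w := z) hld hzd
  have ma := hder_mono hτ hzd hkad
  have mb := hder_mono hτ hzd hkbd
  rw [hder_eq hka hkad] at ma
  rw [hder_eq hkb hkbd] at mb
  have hdiff : hder τ z * (l - z)
      = Δt * νa * (hder τ z * (z - ka)) + Δt * νb * (hder τ z * (z - kb)) := by
    rw [hl]; ring
  rw [hdiff] at g
  have pa : Δt * νa * ((Aa + (if τ = 0 then 1 else 0)) * (z - ka))
      ≤ Δt * νa * (hder τ z * (z - ka)) := by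
    have h := mul_le_mul_of_nonneg_left ma (mul_nonneg hΔt hνa)
    nlinarith [h]
  have pb : Δt * νb * ((Ab + (if τ = 0 then 1 else 0)) * (z - kb))
      ≤ Δt * νb * (hder τ z * (z - kb)) := by
    have h := mul_le_mul_of_nonneg_left mb (mul_nonneg hΔt hνb)
    nlinarith [h]
  linarith

lemma species_int {τ Δt νa νb : ℝ} (hτ : τ ∈ ({-1, 0, 1} : Set ℝ))
    (hΔt : 0 ≤ Δt) (hνa : 0 ≤ νa) (hνb : 0 ≤ νb)
    {fl fs Ka Kb Aa Ab : EuclideanSpace ℝ (Fin 3) → ℝ}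
    (hKa : ∀ p, Ka p = (Real.exp (-Aa p) + τ)⁻¹)
    (hKb : ∀ p, Kb p = (Real.exp (-Ab p) + τ)⁻¹)
    (hl : ∀ p, fl p = fs p + Δt * (νa * (fs p - Ka p) + νb * (fs p - Kb p)))
    (hdom : ∀ p, fl p ∈ entDom τ ∧ fs p ∈ entDom τ ∧ Ka p ∈ entDom τ ∧ Kb p ∈ entDom τ)
    (hil : Integrable (fun p : EuclideanSpace ℝ (Fin 3) => hent τ (fl p)))
    (his : Integrable (fun p : EuclideanSpace ℝ (Fin 3) => hent τ (fs p)))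
    (hGa : Integrable (fun p : EuclideanSpace ℝ (Fin 3) =>
      (Aa p + (if τ = 0 then 1 else 0)) * (fs p - Ka p)))
    (hGb : Integrable (fun p : EuclideanSpace ℝ (Fin 3) =>
      (Ab p + (if τ = 0 then 1 else 0)) * (fs p - Kb p))) :
    (∫ p : EuclideanSpace ℝ (Fin 3), hent τ (fs p))
      + Δt * νa * (∫ p : EuclideanSpace ℝ (Fin 3),
          (Aa p + (if τ = 0 then 1 else 0)) * (fs p - Ka p))
      + Δt * νb * (∫ p : EuclideanSpace ℝ (Fin 3),
          (Ab p + (if τ = 0 then 1 else 0)) * (fs p - Kb p))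
      ≤ ∫ p : EuclideanSpace ℝ (Fin 3), hent τ (fl p) := by
  have key : ∀ p : EuclideanSpace ℝ (Fin 3),
      hent τ (fs p) + Δt * νa * ((Aa p + (if τ = 0 then 1 else 0)) * (fs p - Ka p))
        + Δt * νb * ((Ab p + (if τ = 0 then 1 else 0)) * (fs p - Kb p)) ≤ hent τ (fl p) := by
    intro p
    obtain ⟨h1, h2, h3, h4⟩ := hdom p
    exact species_pw hτ hΔt hνa hνb (hKa p) (hKb p) (hl p) h2 h1 h3 h4
  have hint : Integrable (fun p : EuclideanSpace ℝ (Fin 3) =>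
      hent τ (fs p) + Δt * νa * ((Aa p + (if τ = 0 then 1 else 0)) * (fs p - Ka p))
        + Δt * νb * ((Ab p + (if τ = 0 then 1 else 0)) * (fs p - Kb p))) :=
    (his.add (hGa.const_mul _)).add (hGb.const_mul _)
  have hGa' : Integrable (fun p : EuclideanSpace ℝ (Fin 3) =>
      Δt * νa * ((Aa p + (if τ = 0 then 1 else 0)) * (fs p - Ka p))) := hGa.const_mul _
  have hGb' : Integrable (fun p : EuclideanSpace ℝ (Fin 3) =>
      Δt * νb * ((Ab p + (if τ = 0 then 1 else 0)) * (fs p - Kb p))) := hGb.const_mul _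
  have hIsum : Integrable (fun p : EuclideanSpace ℝ (Fin 3) =>
      hent τ (fs p) + Δt * νa * ((Aa p + (if τ = 0 then 1 else 0)) * (fs p - Ka p))) :=
    his.add hGa'
  have h := integral_mono hint hil key
  rw [integral_add hIsum hGb', integral_add his hGa',
    integral_const_mul, integral_const_mul] at h
  exact h

lemma intE {m : ℝ} {g : EuclideanSpace ℝ (Fin 3) → ℝ}
    (h : Integrable fun p : EuclideanSpace ℝ (Fin 3) => (1 + ‖p‖ ^ 2) * g p) :
    Integrable fun p : EuclideanSpace ℝ (Fin 3) => ‖p‖ ^ 2 / (2 * m) * g p := by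
  have h2 := ((integrable_of_weight h).2).const_mul ((2 * m)⁻¹)
  have he : (fun p : EuclideanSpace ℝ (Fin 3) => (2 * m)⁻¹ * (‖p‖ ^ 2 * g p))
      = fun p => ‖p‖ ^ 2 / (2 * m) * g p := by funext p; ring
  rwa [he] at h2

/-- Discrete H-theorem for the backward-Euler relaxation step. -/
theorem stmt_13 (τ₁ τ₂ : ℝ)
    (hτ₁ : τ₁ ∈ ({-1, 0, 1} : Set ℝ)) (hτ₂ : τ₂ ∈ ({-1, 0, 1} : Set ℝ))
    (m₁ m₂ Δt ν₁₁ ν₂₂ ν₁₂ ν₂₁ d₁ d₂ : ℝ)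
    (hm₁ : 0 < m₁) (hm₂ : 0 < m₂) (hΔt : 0 < Δt)
    (hν₁₁ : 0 < ν₁₁) (hν₂₂ : 0 < ν₂₂) (hν₁₂ : 0 < ν₁₂) (hν₂₁ : 0 < ν₂₁)
    (hrec : ν₁₂ = ν₂₁)
    (hd₁ : d₁ = (1 + Δt * (ν₁₁ + ν₁₂))⁻¹) (hd₂ : d₂ = (1 + Δt * (ν₂₂ + ν₂₁))⁻¹)
    (f₁l f₂l f₁s f₂s K₁₁ K₂₂ K₁₂ K₂₁ : EuclideanSpace ℝ (Fin 3) → ℝ)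
    -- equilibria of exponential form, with shared inter-species multipliers
    (a₁0 a₁2 a₂0 a₂2 b₁0 b₂0 b2 : ℝ) (a₁1 a₂1 b1 : EuclideanSpace ℝ (Fin 3))
    (hK₁₁ : ∀ p, K₁₁ p =
      (Real.exp (-(a₁0 + ⟪a₁1, p⟫ + a₁2 * ‖p‖ ^ 2 / (2 * m₁))) + τ₁)⁻¹)
    (hK₂₂ : ∀ p, K₂₂ p =
      (Real.exp (-(a₂0 + ⟪a₂1, p⟫ + a₂2 * ‖p‖ ^ 2 / (2 * m₂))) + τ₂)⁻¹)
    (hK₁₂ : ∀ p, K₁₂ p =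
      (Real.exp (-(b₁0 + ⟪b1, p⟫ + b2 * ‖p‖ ^ 2 / (2 * m₁))) + τ₁)⁻¹)
    (hK₂₁ : ∀ p, K₂₁ p =
      (Real.exp (-(b₂0 + ⟪b1, p⟫ + b2 * ‖p‖ ^ 2 / (2 * m₂))) + τ₂)⁻¹)
    -- implicit relaxation update
    (hup₁ : ∀ p, f₁s p = d₁ * f₁l p + d₁ * Δt * (ν₁₁ * K₁₁ p + ν₁₂ * K₁₂ p))
    (hup₂ : ∀ p, f₂s p = d₂ * f₂l p + d₂ * Δt * (ν₂₂ * K₂₂ p + ν₂₁ * K₂₁ p))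
    -- all functions take values in the domain of the respective entropy
    (hdom₁ : ∀ p, f₁l p ∈ entDom τ₁ ∧ f₁s p ∈ entDom τ₁ ∧
      K₁₁ p ∈ entDom τ₁ ∧ K₁₂ p ∈ entDom τ₁)
    (hdom₂ : ∀ p, f₂l p ∈ entDom τ₂ ∧ f₂s p ∈ entDom τ₂ ∧
      K₂₂ p ∈ entDom τ₂ ∧ K₂₁ p ∈ entDom τ₂)
    -- integrability of all entropy integrands and moments
    (hint₁ : ∀ g ∈ [f₁l, f₁s, K₁₁, K₁₂],
      Integrable (fun p : EuclideanSpace ℝ (Fin 3) => hent τ₁ (g p)) ∧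
      Integrable (fun p : EuclideanSpace ℝ (Fin 3) => (1 + ‖p‖ ^ 2) * g p) ∧
      Integrable (fun p : EuclideanSpace ℝ (Fin 3) => g p • p))
    (hint₂ : ∀ g ∈ [f₂l, f₂s, K₂₂, K₂₁],
      Integrable (fun p : EuclideanSpace ℝ (Fin 3) => hent τ₂ (g p)) ∧
      Integrable (fun p : EuclideanSpace ℝ (Fin 3) => (1 + ‖p‖ ^ 2) * g p) ∧
      Integrable (fun p : EuclideanSpace ℝ (Fin 3) => g p • p))
    -- intra-species conservation constraints
    (hc₁₁0 : (∫ p : EuclideanSpace ℝ (Fin 3), K₁₁ p) = ∫ p : EuclideanSpace ℝ (Fin 3), f₁s p)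
    (hc₁₁1 : (∫ p : EuclideanSpace ℝ (Fin 3), K₁₁ p • p) =
      ∫ p : EuclideanSpace ℝ (Fin 3), f₁s p • p)
    (hc₁₁2 : (∫ p : EuclideanSpace ℝ (Fin 3), ‖p‖ ^ 2 / (2 * m₁) * K₁₁ p) =
      ∫ p : EuclideanSpace ℝ (Fin 3), ‖p‖ ^ 2 / (2 * m₁) * f₁s p)
    (hc₂₂0 : (∫ p : EuclideanSpace ℝ (Fin 3), K₂₂ p) = ∫ p : EuclideanSpace ℝ (Fin 3), f₂s p)
    (hc₂₂1 : (∫ p : EuclideanSpace ℝ (Fin 3), K₂₂ p • p) =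
      ∫ p : EuclideanSpace ℝ (Fin 3), f₂s p • p)
    (hc₂₂2 : (∫ p : EuclideanSpace ℝ (Fin 3), ‖p‖ ^ 2 / (2 * m₂) * K₂₂ p) =
      ∫ p : EuclideanSpace ℝ (Fin 3), ‖p‖ ^ 2 / (2 * m₂) * f₂s p)
    -- inter-species conservation constraints
    (hc₁₂0 : (∫ p : EuclideanSpace ℝ (Fin 3), K₁₂ p) = ∫ p : EuclideanSpace ℝ (Fin 3), f₁s p)
    (hc₂₁0 : (∫ p : EuclideanSpace ℝ (Fin 3), K₂₁ p) = ∫ p : EuclideanSpace ℝ (Fin 3), f₂s p)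
    (hcmom : ν₁₂ • (∫ p : EuclideanSpace ℝ (Fin 3), (K₁₂ p - f₁s p) • p) +
      ν₂₁ • (∫ p : EuclideanSpace ℝ (Fin 3), (K₂₁ p - f₂s p) • p) = 0)
    (hcen : ν₁₂ * (∫ p : EuclideanSpace ℝ (Fin 3), ‖p‖ ^ 2 / (2 * m₁) * (K₁₂ p - f₁s p)) +
      ν₂₁ * (∫ p : EuclideanSpace ℝ (Fin 3), ‖p‖ ^ 2 / (2 * m₂) * (K₂₁ p - f₂s p)) = 0) :
    (∫ p : EuclideanSpace ℝ (Fin 3), hent τ₁ (f₁s p)) +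
        (∫ p : EuclideanSpace ℝ (Fin 3), hent τ₂ (f₂s p)) ≤
      (∫ p : EuclideanSpace ℝ (Fin 3), hent τ₁ (f₁l p)) +
        (∫ p : EuclideanSpace ℝ (Fin 3), hent τ₂ (f₂l p)) := by
  
  have hΔt' := hΔt.le
  -- integrability packages
  have H1l := hint₁ f₁l (by simp)
  have H1s := hint₁ f₁s (by simp)
  have H11 := hint₁ K₁₁ (by simp)
  have H12 := hint₁ K₁₂ (by simp)
  have H2l := hint₂ f₂l (by simp)
  have H2s := hint₂ f₂s (by simp)
  have H22 := hint₂ K₂₂ (by simp)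
  have H21 := hint₂ K₂₁ (by simp)
  obtain ⟨G11i, G11v⟩ := Gint (m := m₁) (a0 := a₁0) (a2 := a₁2)
    (c := if τ₁ = 0 then (1:ℝ) else 0) a₁1 H1s.2.1 H11.2.1 H1s.2.2 H11.2.2
  obtain ⟨G12i, G12v⟩ := Gint (m := m₁) (a0 := b₁0) (a2 := b2)
    (c := if τ₁ = 0 then (1:ℝ) else 0) b1 H1s.2.1 H12.2.1 H1s.2.2 H12.2.2
  obtain ⟨G22i, G22v⟩ := Gint (m := m₂) (a0 := a₂0) (a2 := a₂2)
    (c := if τ₂ = 0 then (1:ℝ) else 0) a₂1 H2s.2.1 H22.2.1 H2s.2.2 H22.2.2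
  obtain ⟨G21i, G21v⟩ := Gint (m := m₂) (a0 := b₂0) (a2 := b2)
    (c := if τ₂ = 0 then (1:ℝ) else 0) b1 H2s.2.1 H21.2.1 H2s.2.2 H21.2.2
  -- the update in explicit form
  have hl₁ : ∀ p, f₁l p = f₁s p + Δt * (ν₁₁ * (f₁s p - K₁₁ p) + ν₁₂ * (f₁s p - K₁₂ p)) := by
    intro p
    have h := hup₁ p
    rw [hd₁] at h
    have hD : (0:ℝ) < 1 + Δt * (ν₁₁ + ν₁₂) := by positivity
    field_simp at h
    linarith
  have hl₂ : ∀ p, f₂l p = f₂s p + Δt * (ν₂₂ * (f₂s p - K₂₂ p) + ν₂₁ * (f₂s p - K₂₁ p)) := by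
    intro p
    have h := hup₂ p
    rw [hd₂] at h
    have hD : (0:ℝ) < 1 + Δt * (ν₂₂ + ν₂₁) := by positivity
    field_simp at h
    linarith
  -- species-wise entropy inequalities
  have S1 : (∫ p : EuclideanSpace ℝ (Fin 3), hent τ₁ (f₁s p))
      + Δt * ν₁₁ * (∫ p : EuclideanSpace ℝ (Fin 3),
          (a₁0 + ⟪a₁1, p⟫ + a₁2 * ‖p‖ ^ 2 / (2 * m₁) + (if τ₁ = 0 then (1:ℝ) else 0))
            * (f₁s p - K₁₁ p))
      + Δt * ν₁₂ * (∫ p : EuclideanSpace ℝ (Fin 3),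
          (b₁0 + ⟪b1, p⟫ + b2 * ‖p‖ ^ 2 / (2 * m₁) + (if τ₁ = 0 then (1:ℝ) else 0))
            * (f₁s p - K₁₂ p))
      ≤ ∫ p : EuclideanSpace ℝ (Fin 3), hent τ₁ (f₁l p) :=
    species_int (Aa := fun p => a₁0 + ⟪a₁1, p⟫ + a₁2 * ‖p‖ ^ 2 / (2 * m₁))
      (Ab := fun p => b₁0 + ⟪b1, p⟫ + b2 * ‖p‖ ^ 2 / (2 * m₁))
      hτ₁ hΔt' hν₁₁.le hν₁₂.le hK₁₁ hK₁₂ hl₁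
      (fun p => ⟨(hdom₁ p).1, (hdom₁ p).2.1, (hdom₁ p).2.2.1, (hdom₁ p).2.2.2⟩)
      H1l.1 H1s.1 G11i G12i
  have S2 : (∫ p : EuclideanSpace ℝ (Fin 3), hent τ₂ (f₂s p))
      + Δt * ν₂₂ * (∫ p : EuclideanSpace ℝ (Fin 3),
          (a₂0 + ⟪a₂1, p⟫ + a₂2 * ‖p‖ ^ 2 / (2 * m₂) + (if τ₂ = 0 then (1:ℝ) else 0))
            * (f₂s p - K₂₂ p))
      + Δt * ν₂₁ * (∫ p : EuclideanSpace ℝ (Fin 3),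
          (b₂0 + ⟪b1, p⟫ + b2 * ‖p‖ ^ 2 / (2 * m₂) + (if τ₂ = 0 then (1:ℝ) else 0))
            * (f₂s p - K₂₁ p))
      ≤ ∫ p : EuclideanSpace ℝ (Fin 3), hent τ₂ (f₂l p) :=
    species_int (Aa := fun p => a₂0 + ⟪a₂1, p⟫ + a₂2 * ‖p‖ ^ 2 / (2 * m₂))
      (Ab := fun p => b₂0 + ⟪b1, p⟫ + b2 * ‖p‖ ^ 2 / (2 * m₂))
      hτ₂ hΔt' hν₂₂.le hν₂₁.le hK₂₂ hK₂₁ hl₂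
      (fun p => ⟨(hdom₂ p).1, (hdom₂ p).2.1, (hdom₂ p).2.2.1, (hdom₂ p).2.2.2⟩)
      H2l.1 H2s.1 G22i G21i
  -- intra-species integrals vanish
  have Z11 : (∫ p : EuclideanSpace ℝ (Fin 3),
      (a₁0 + ⟪a₁1, p⟫ + a₁2 * ‖p‖ ^ 2 / (2 * m₁) + (if τ₁ = 0 then (1:ℝ) else 0))
        * (f₁s p - K₁₁ p)) = 0 := by
    rw [G11v, hc₁₁0, hc₁₁1, hc₁₁2]; simp
  have Z22 : (∫ p : EuclideanSpace ℝ (Fin 3),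
      (a₂0 + ⟪a₂1, p⟫ + a₂2 * ‖p‖ ^ 2 / (2 * m₂) + (if τ₂ = 0 then (1:ℝ) else 0))
        * (f₂s p - K₂₂ p)) = 0 := by
    rw [G22v, hc₂₂0, hc₂₂1, hc₂₂2]; simp
  -- momentum: rewrite hcmom
  have V1 : (∫ p : EuclideanSpace ℝ (Fin 3), (K₁₂ p - f₁s p) • p)
      = (∫ p : EuclideanSpace ℝ (Fin 3), K₁₂ p • p)
        - ∫ p : EuclideanSpace ℝ (Fin 3), f₁s p • p := by
    rw [← integral_sub H12.2.2 H1s.2.2]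
    exact integral_congr_ae (Filter.Eventually.of_forall fun p => by simp [sub_smul])
  have V2 : (∫ p : EuclideanSpace ℝ (Fin 3), (K₂₁ p - f₂s p) • p)
      = (∫ p : EuclideanSpace ℝ (Fin 3), K₂₁ p • p)
        - ∫ p : EuclideanSpace ℝ (Fin 3), f₂s p • p := by
    rw [← integral_sub H21.2.2 H2s.2.2]
    exact integral_congr_ae (Filter.Eventually.of_forall fun p => by simp [sub_smul])
  have hmom : ν₁₂ • ((∫ p : EuclideanSpace ℝ (Fin 3), f₁s p • p)
        - ∫ p : EuclideanSpace ℝ (Fin 3), K₁₂ p • p)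
      + ν₂₁ • ((∫ p : EuclideanSpace ℝ (Fin 3), f₂s p • p)
        - ∫ p : EuclideanSpace ℝ (Fin 3), K₂₁ p • p) = 0 := by
    have h := hcmom
    rw [V1, V2] at h
    have e : ν₁₂ • ((∫ p : EuclideanSpace ℝ (Fin 3), f₁s p • p)
          - ∫ p : EuclideanSpace ℝ (Fin 3), K₁₂ p • p)
        + ν₂₁ • ((∫ p : EuclideanSpace ℝ (Fin 3), f₂s p • p)
          - ∫ p : EuclideanSpace ℝ (Fin 3), K₂₁ p • p)
        = -(ν₁₂ • ((∫ p : EuclideanSpace ℝ (Fin 3), K₁₂ p • p)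
            - ∫ p : EuclideanSpace ℝ (Fin 3), f₁s p • p)
          + ν₂₁ • ((∫ p : EuclideanSpace ℝ (Fin 3), K₂₁ p • p)
            - ∫ p : EuclideanSpace ℝ (Fin 3), f₂s p • p)) := by
      simp only [smul_sub]; abel
    rw [e, h, neg_zero]
  have hinner : ν₁₂ * ⟪b1, (∫ p : EuclideanSpace ℝ (Fin 3), f₁s p • p)
        - ∫ p : EuclideanSpace ℝ (Fin 3), K₁₂ p • p⟫
      + ν₂₁ * ⟪b1, (∫ p : EuclideanSpace ℝ (Fin 3), f₂s p • p)
        - ∫ p : EuclideanSpace ℝ (Fin 3), K₂₁ p • p⟫ = 0 := by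
    rw [← real_inner_smul_right, ← real_inner_smul_right, ← inner_add_right, hmom,
      inner_zero_right]
  -- energy: rewrite hcen
  have E1 : (∫ p : EuclideanSpace ℝ (Fin 3), ‖p‖ ^ 2 / (2 * m₁) * (K₁₂ p - f₁s p))
      = (∫ p : EuclideanSpace ℝ (Fin 3), ‖p‖ ^ 2 / (2 * m₁) * K₁₂ p)
        - ∫ p : EuclideanSpace ℝ (Fin 3), ‖p‖ ^ 2 / (2 * m₁) * f₁s p := by
    rw [← integral_sub (intE H12.2.1) (intE H1s.2.1)]
    exact integral_congr_ae (Filter.Eventually.of_forall fun p => by ring)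
  have E2 : (∫ p : EuclideanSpace ℝ (Fin 3), ‖p‖ ^ 2 / (2 * m₂) * (K₂₁ p - f₂s p))
      = (∫ p : EuclideanSpace ℝ (Fin 3), ‖p‖ ^ 2 / (2 * m₂) * K₂₁ p)
        - ∫ p : EuclideanSpace ℝ (Fin 3), ‖p‖ ^ 2 / (2 * m₂) * f₂s p := by
    rw [← integral_sub (intE H21.2.1) (intE H2s.2.1)]
    exact integral_congr_ae (Filter.Eventually.of_forall fun p => by ring)
  have heng : ν₁₂ * ((∫ p : EuclideanSpace ℝ (Fin 3), ‖p‖ ^ 2 / (2 * m₁) * f₁s p)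
        - ∫ p : EuclideanSpace ℝ (Fin 3), ‖p‖ ^ 2 / (2 * m₁) * K₁₂ p)
      + ν₂₁ * ((∫ p : EuclideanSpace ℝ (Fin 3), ‖p‖ ^ 2 / (2 * m₂) * f₂s p)
        - ∫ p : EuclideanSpace ℝ (Fin 3), ‖p‖ ^ 2 / (2 * m₂) * K₂₁ p) = 0 := by
    have h := hcen
    rw [E1, E2] at h
    linarith
  -- the inter-species combination vanishes
  have Zinter : ν₁₂ * (∫ p : EuclideanSpace ℝ (Fin 3),
        (b₁0 + ⟪b1, p⟫ + b2 * ‖p‖ ^ 2 / (2 * m₁) + (if τ₁ = 0 then (1:ℝ) else 0))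
          * (f₁s p - K₁₂ p))
      + ν₂₁ * (∫ p : EuclideanSpace ℝ (Fin 3),
        (b₂0 + ⟪b1, p⟫ + b2 * ‖p‖ ^ 2 / (2 * m₂) + (if τ₂ = 0 then (1:ℝ) else 0))
          * (f₂s p - K₂₁ p)) = 0 := by
    rw [G12v, G21v]
    linear_combination (-(ν₁₂ * (b₁0 + (if τ₁ = 0 then (1:ℝ) else 0)))) * hc₁₂0
      + (-(ν₂₁ * (b₂0 + (if τ₂ = 0 then (1:ℝ) else 0)))) * hc₂₁0
      + hinner + b2 * heng
  have ZZ1 : Δt * ν₁₁ * (∫ p : EuclideanSpace ℝ (Fin 3),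
      (a₁0 + ⟪a₁1, p⟫ + a₁2 * ‖p‖ ^ 2 / (2 * m₁) + (if τ₁ = 0 then (1:ℝ) else 0))
        * (f₁s p - K₁₁ p)) = 0 := by rw [Z11]; ring
  have ZZ2 : Δt * ν₂₂ * (∫ p : EuclideanSpace ℝ (Fin 3),
      (a₂0 + ⟪a₂1, p⟫ + a₂2 * ‖p‖ ^ 2 / (2 * m₂) + (if τ₂ = 0 then (1:ℝ) else 0))
        * (f₂s p - K₂₂ p)) = 0 := by rw [Z22]; ring
  have ZZ3 : Δt * ν₁₂ * (∫ p : EuclideanSpace ℝ (Fin 3),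
        (b₁0 + ⟪b1, p⟫ + b2 * ‖p‖ ^ 2 / (2 * m₁) + (if τ₁ = 0 then (1:ℝ) else 0))
          * (f₁s p - K₁₂ p))
      + Δt * ν₂₁ * (∫ p : EuclideanSpace ℝ (Fin 3),
        (b₂0 + ⟪b1, p⟫ + b2 * ‖p‖ ^ 2 / (2 * m₂) + (if τ₂ = 0 then (1:ℝ) else 0))
          * (f₂s p - K₂₁ p)) = 0 := by linear_combination Δt * Zinter
  linarith [S1, S2]
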